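/- Let W(N) be the number of contact matrices of simple random walks of length N on Z^n, n ≥ 3. Assume that for some constants a, c > 0 and all large N, P(R_N ≤ N^α) ≥ c·exp(−a N^{1−2α/n}) for α ∈ (0,1). Then there exists κ_n > 0 such that for large N, γ_N = ln W(N)/(N ln(2n)) ≥ 1 − κ_n·N^{−2/(n+2)}. In particular γ_N → 1. -/

import Mathlib

open Finset

/-- The unit step of a simple walk on `ℤ^n` given a direction `d`. -/
def stepVec (n : ℕ) (d : Fin n × Bool) : Fin n → ℤ :=
  fun j => if j = d.1 then (if d.2 then 1 else -1) else 0

/-- Position after `i` steps of the walk encoded by the step sequence `s`. -/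
def pos {n N : ℕ} (s : Fin N → Fin n × Bool) (i : ℕ) : Fin n → ℤ :=
  ∑ k ∈ Finset.univ.filter (fun k : Fin N => (k : ℕ) < i), stepVec n (s k)

/-- Contact matrix: `1` iff positions at distinct times agree. -/
def cm {n N : ℕ} (s : Fin N → Fin n × Bool) : Fin (N + 1) → Fin (N + 1) → Bool :=
  fun i j => decide ((i : ℕ) ≠ (j : ℕ) ∧ pos s i = pos s j)

/-- Degeneracy: number of walks of length `N` sharing the contact matrix of `s`. -/
def degC {n N : ℕ} (s : Fin N → Fin n × Bool) : ℕ :=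
  (Finset.univ.filter (fun s' : Fin N → Fin n × Bool => cm s' = cm s)).card

/-- Range: number of distinct sites visited. -/
def rangeRW {n N : ℕ} (s : Fin N → Fin n × Bool) : ℕ :=
  (Finset.univ.image (fun i : Fin (N + 1) => pos s (i : ℕ))).card

/-- Number of contact matrices realized by walks of length `N` on `ℤ^n`. -/
def W (n N : ℕ) : ℕ :=
  (Finset.univ.image (fun s : Fin N → Fin n × Bool => cm s)).card

noncomputable def gammaRW (n N : ℕ) : ℝ :=
  Real.log (W n N) / (N * Real.log (2 * n))

/-- Coarse-grained Shannon entropy of the contact-matrix partition, uniform measure. -/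
noncomputable def SC (n N : ℕ) : ℝ :=
  ∑ C : Fin (N + 1) → Fin (N + 1) → Bool,
    Real.negMulLog
      (((Finset.univ.filter (fun s : Fin N → Fin n × Bool => cm s = C)).card : ℝ) / (2 * n) ^ N)

noncomputable def deltaRW (n N : ℕ) : ℝ :=
  SC n N / (N * Real.log (2 * n))

/-- Expected range under the uniform measure. -/
noncomputable def ER (n N : ℕ) : ℝ :=
  (∑ s : Fin N → Fin n × Bool, (rangeRW s : ℝ)) / (2 * n) ^ N

lemma pos_zero {n N : ℕ} (s : Fin N → Fin n × Bool) : pos s 0 = 0 := by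
  unfold pos
  have h : (Finset.univ.filter (fun k : Fin N => (k:ℕ) < 0)) = ∅ := by simp
  simp [h]

lemma pos_succ {n N : ℕ} (s : Fin N → Fin n × Bool) (i : ℕ) (hi : i < N) :
    pos s (i+1) = pos s i + stepVec n (s ⟨i, hi⟩) := by
  unfold pos
  have h : Finset.univ.filter (fun k : Fin N => (k:ℕ) < i+1)
      = insert ⟨i, hi⟩ (Finset.univ.filter (fun k : Fin N => (k:ℕ) < i)) := by
    ext k
    simp [Nat.lt_succ_iff_lt_or_eq, Fin.ext_iff, or_comm]
    exact Nat.le_iff_lt_or_eq.trans or_comm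
  rw [h, Finset.sum_insert (by simp)]
  exact (add_comm _ _)

lemma stepVec_injective {n : ℕ} : Function.Injective (stepVec n) := by
  rintro ⟨i, b⟩ ⟨j, b'⟩ h
  have h1 := congrFun h i
  by_cases hij : i = j
  · subst hij
    simp only [stepVec, if_pos rfl] at h1
    cases b <;> cases b' <;> simp_all
  · simp only [stepVec, if_pos rfl, if_neg hij] at h1
    cases b <;> simp_all

def freshSet {n N : ℕ} (s : Fin N → Fin n × Bool) : Finset (Fin N) :=
  Finset.univ.filter (fun i => ∀ j : ℕ, j ≤ (i:ℕ) → pos s ((i:ℕ)+1) ≠ pos s j)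

lemma freshSet_card_lt {n N : ℕ} (s : Fin N → Fin n × Bool) :
    (freshSet s).card < rangeRW s := by
  classical
  set T : Finset (Fin n → ℤ) :=
    insert (pos s 0) ((freshSet s).image (fun i : Fin N => pos s ((i:ℕ)+1))) with hT
  have hnotmem : pos s 0 ∉ (freshSet s).image (fun i : Fin N => pos s ((i:ℕ)+1)) := by
    intro hmem
    obtain ⟨i, hi, hpi⟩ := Finset.mem_image.mp hmem
    have := (Finset.mem_filter.mp hi).2 0 (Nat.zero_le _)
    exact this.symm hpi.symm
  have hinj : Set.InjOn (fun i : Fin N => pos s ((i:ℕ)+1)) (freshSet s) := by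
    intro i hi i' hi' hpi
    by_contra hne
    rcases Nat.lt_or_ge (i:ℕ) (i':ℕ) with hlt | hge
    · exact (Finset.mem_filter.mp hi').2 ((i:ℕ)+1) hlt hpi.symm
    · have hlt : (i':ℕ) < (i:ℕ) := by
        rcases Nat.lt_or_ge (i':ℕ) (i:ℕ) with h | h
        · exact h
        · exact absurd (Fin.ext (le_antisymm h hge)) hne
      exact (Finset.mem_filter.mp hi).2 ((i':ℕ)+1) hlt hpi
  have hcardT : T.card = (freshSet s).card + 1 := by
    rw [hT, Finset.card_insert_of_notMem hnotmem, Finset.card_image_of_injOn hinj]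
  have hsub : T ⊆ Finset.univ.image (fun i : Fin (N + 1) => pos s (i : ℕ)) := by
    intro x hx
    rw [hT] at hx
    rcases Finset.mem_insert.mp hx with h | h
    · subst h
      exact Finset.mem_image.mpr ⟨⟨0, Nat.succ_pos N⟩, Finset.mem_univ _, rfl⟩
    · obtain ⟨i, _, hpi⟩ := Finset.mem_image.mp h
      exact Finset.mem_image.mpr ⟨⟨(i:ℕ)+1, Nat.succ_lt_succ i.isLt⟩, Finset.mem_univ _, hpi⟩
  have h2 := Finset.card_le_card hsub
  rw [hcardT] at h2
  unfold rangeRW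
  omega

lemma cm_pos_eq {n N : ℕ} {s s' : Fin N → Fin n × Bool} (h : cm s' = cm s)
    {i j : ℕ} (hi : i < N + 1) (hj : j < N + 1) (hij : i ≠ j) :
    (pos s' i = pos s' j ↔ pos s i = pos s j) := by
  have hc := congrFun (congrFun h ⟨i, hi⟩) ⟨j, hj⟩
  simp only [cm, decide_eq_decide] at hc
  constructor
  · intro hp; exact (hc.mp ⟨hij, hp⟩).2
  · intro hp; exact (hc.mpr ⟨hij, hp⟩).2

lemma fiber_card_le {n N : ℕ} (s : Fin N → Fin n × Bool) :
    (Finset.univ.filter (fun s' : Fin N → Fin n × Bool => cm s' = cm s)).card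
      ≤ (2*n) ^ (freshSet s).card := by
  classical
  have key : ∀ s1 s2 : Fin N → Fin n × Bool, cm s1 = cm s → cm s2 = cm s →
      (∀ i ∈ freshSet s, s1 i = s2 i) → s1 = s2 := by
    intro s1 s2 h1 h2 hf
    have main : ∀ i : ℕ, i ≤ N → pos s1 i = pos s2 i := by
      intro i
      induction i using Nat.strong_induction_on with
      | _ i IH =>
        match i with
        | 0 => intro _; rw [pos_zero, pos_zero]
        | (m+1) =>
          intro hm1
          have hm : m < N := hm1
          by_cases hfresh : (⟨m, hm⟩ : Fin N) ∈ freshSet s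
          · rw [pos_succ s1 m hm, pos_succ s2 m hm, IH m (Nat.lt_succ_self m) (le_of_lt hm),
              hf _ hfresh]
          · have : ∃ j : ℕ, j ≤ m ∧ pos s (m+1) = pos s j := by
              simp only [freshSet, Finset.mem_filter, Finset.mem_univ, true_and, not_forall] at hfresh
              obtain ⟨j, hj, hp⟩ := hfresh
              exact ⟨j, hj, not_not.mp hp⟩
            obtain ⟨j, hjm, hpj⟩ := this
            have hij : m + 1 ≠ j := by omega
            have hjN : j < N + 1 := by omega
            have e1 : pos s1 (m+1) = pos s1 j :=
              (cm_pos_eq h1 (by omega) hjN hij).mpr hpj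
            have e2 : pos s2 (m+1) = pos s2 j :=
              (cm_pos_eq h2 (by omega) hjN hij).mpr hpj
            rw [e1, e2, IH j (by omega) (by omega)]
    funext i
    apply stepVec_injective
    have e1 : stepVec n (s1 i) = pos s1 ((i:ℕ)+1) - pos s1 (i:ℕ) := by
      rw [pos_succ s1 (i:ℕ) i.isLt]; ring
    have e2 : stepVec n (s2 i) = pos s2 ((i:ℕ)+1) - pos s2 (i:ℕ) := by
      rw [pos_succ s2 (i:ℕ) i.isLt]; ring
    rw [e1, e2, main (i:ℕ) (le_of_lt i.isLt), main ((i:ℕ)+1) i.isLt]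
  calc (Finset.univ.filter (fun s' : Fin N → Fin n × Bool => cm s' = cm s)).card
      ≤ (Finset.univ : Finset ({x // x ∈ freshSet s} → Fin n × Bool)).card := by
        apply Finset.card_le_card_of_injOn (fun (s' : Fin N → Fin n × Bool) (i : {x // x ∈ freshSet s}) => s' i)
        · intro _ _; exact Finset.mem_univ _
        · intro s1 h1 s2 h2 hf
          have h1' := (Finset.mem_filter.mp h1).2
          have h2' := (Finset.mem_filter.mp h2).2
          apply key s1 s2 h1' h2'
          intro i hi
          exact congrFun hf ⟨i, hi⟩
    _ = (2*n) ^ (freshSet s).card := by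
        rw [Finset.card_univ, Fintype.card_fun, Fintype.card_prod, Fintype.card_fin,
          Fintype.card_bool, Fintype.card_coe]
        ring_nf

lemma card_range_le_bound {n N : ℕ} (hn : 1 ≤ n) (r : ℕ) :
    (Finset.univ.filter (fun s : Fin N → Fin n × Bool => rangeRW s ≤ r)).card
      ≤ (2*n) ^ r * W n N := by
  classical
  set A := Finset.univ.filter (fun s : Fin N → Fin n × Bool => rangeRW s ≤ r) with hA
  have h : A.card ≤ (2*n)^r * (A.image cm).card := by
    apply Finset.card_le_mul_card_image
    intro C hC
    obtain ⟨s0, hs0A, hs0⟩ := Finset.mem_image.mp hC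
    have hsub : A.filter (fun x => cm x = C) ⊆
        Finset.univ.filter (fun s' : Fin N → Fin n × Bool => cm s' = cm s0) := by
      intro x hx
      rw [Finset.mem_filter] at hx ⊢
      exact ⟨Finset.mem_univ _, hx.2.trans hs0.symm⟩
    have hr : rangeRW s0 ≤ r := (Finset.mem_filter.mp hs0A).2
    have hfr : (freshSet s0).card ≤ r := le_of_lt (lt_of_lt_of_le (freshSet_card_lt s0) hr)
    calc (A.filter (fun x => cm x = C)).card
        ≤ (Finset.univ.filter (fun s' : Fin N → Fin n × Bool => cm s' = cm s0)).card :=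
          Finset.card_le_card hsub
      _ ≤ (2*n) ^ (freshSet s0).card := fiber_card_le s0
      _ ≤ (2*n) ^ r := Nat.pow_le_pow_right (by omega) hfr
  have himg : (A.image cm).card ≤ W n N := by
    apply Finset.card_le_card
    apply Finset.image_subset_image
    exact Finset.subset_univ A
  calc A.card ≤ (2*n)^r * (A.image cm).card := h
    _ ≤ (2*n)^r * W n N := Nat.mul_le_mul_left _ himg

lemma W_pos {n N : ℕ} (hn : 1 ≤ n) : 1 ≤ W n N := by
  have : Nonempty (Fin n × Bool) := ⟨(⟨0, by omega⟩, true)⟩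
  rw [W, Nat.one_le_iff_ne_zero, ← Nat.pos_iff_ne_zero, Finset.card_pos]
  exact (Finset.univ_nonempty).image _

lemma W_le {n N : ℕ} : W n N ≤ (2*n) ^ N := by
  classical
  calc W n N ≤ (Finset.univ : Finset (Fin N → Fin n × Bool)).card :=
        Finset.card_image_le
    _ = (2*n) ^ N := by
        simp [Fintype.card_fun]
        ring

open Filter in
/-- For SRW on `ℤ^n`, `n ≥ 3`: if for some constants `a, c > 0` one has
`P(R_N ≤ N^α) ≥ c exp(-a N^{1-2α/n})` for every `α ∈ (0,1)` and all large `N`,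
then there is `κₙ > 0` with `γ_N ≥ 1 - κₙ N^{-2/(n+2)}` for large `N`; in
particular `γ_N → 1`. -/
theorem gammaRW_lower_bound_high_dim (n : ℕ) (hn : 3 ≤ n)
    (a c : ℝ) (ha : 0 < a) (hc : 0 < c)
    (hP : ∀ α : ℝ, 0 < α → α < 1 → ∀ᶠ N : ℕ in atTop,
      (((Finset.univ.filter
          (fun s : Fin N → Fin n × Bool => (rangeRW s : ℝ) ≤ (N : ℝ) ^ α)).card : ℝ)
            / (2 * n) ^ N)
        ≥ c * Real.exp (-a * (N : ℝ) ^ (1 - 2 * α / n))) :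
    (∃ κ : ℝ, 0 < κ ∧ ∀ᶠ N : ℕ in atTop,
        gammaRW n N ≥ 1 - κ * (N : ℝ) ^ (-(2 : ℝ) / (n + 2))) ∧
      Tendsto (fun N => gammaRW n N) atTop (nhds 1) := by
  have hn3 : (3:ℝ) ≤ (n:ℝ) := by exact_mod_cast hn
  have hlog : 0 < Real.log (2 * (n:ℝ)) := Real.log_pos (by linarith)
  set α : ℝ := (n:ℝ) / ((n:ℝ) + 2) with hαdef
  have hα0 : 0 < α := by positivity
  have hα1 : α < 1 := by
    rw [hαdef, div_lt_one (by linarith)]; linarith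
  have hexp : 1 - 2 * α / (n:ℝ) = α := by
    rw [hαdef]; field_simp; ring
  have heα : -(2:ℝ) / ((n:ℝ) + 2) = α - 1 := by
    rw [hαdef]; field_simp; ring
  set κ : ℝ := (a + Real.log (2 * (n:ℝ)) + 1 + |Real.log c|) / Real.log (2 * (n:ℝ)) with hκdef
  have hκ0 : 0 < κ := by
    apply div_pos _ hlog
    have := abs_nonneg (Real.log c)
    linarith
  have hmain : ∀ᶠ N : ℕ in atTop,
      gammaRW n N ≥ 1 - κ * (N : ℝ) ^ (-(2 : ℝ) / ((n:ℝ) + 2)) := by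
    filter_upwards [hP α hα0 hα1, eventually_ge_atTop 1] with N hPN hN1
    have hN0 : (0:ℝ) < (N:ℝ) := by exact_mod_cast hN1
    have hN1' : (1:ℝ) ≤ (N:ℝ) := by exact_mod_cast hN1
    have hD : 0 < (N:ℝ) * Real.log (2 * (n:ℝ)) := mul_pos hN0 hlog
    set r : ℕ := Nat.floor ((N:ℝ) ^ α) with hrdef
    have hrle : (r:ℝ) ≤ (N:ℝ) ^ α := Nat.floor_le (Real.rpow_nonneg (le_of_lt hN0) α)
    -- cardinality chain
    have hsub : (Finset.univ.filter
          (fun s : Fin N → Fin n × Bool => (rangeRW s : ℝ) ≤ (N : ℝ) ^ α))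
        ⊆ (Finset.univ.filter (fun s : Fin N → Fin n × Bool => rangeRW s ≤ r)) := by
      intro s hs
      rw [Finset.mem_filter] at hs ⊢
      exact ⟨Finset.mem_univ _, Nat.le_floor hs.2⟩
    have hcard : ((Finset.univ.filter
          (fun s : Fin N → Fin n × Bool => (rangeRW s : ℝ) ≤ (N : ℝ) ^ α)).card : ℝ)
        ≤ ((2*n:ℕ) : ℝ) ^ r * (W n N : ℝ) := by
      have h1 := Finset.card_le_card hsub
      have h2 := card_range_le_bound (n := n) (N := N) (by omega) r
      have := le_trans h1 h2
      push_cast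
      exact_mod_cast this
    rw [hexp] at hPN
    have hpowN : (0:ℝ) < (2 * (n:ℝ)) ^ N := by positivity
    have hcard' : ((Finset.univ.filter
          (fun s : Fin N → Fin n × Bool => (rangeRW s : ℝ) ≤ (N : ℝ) ^ α)).card : ℝ)
        ≤ (2 * (n:ℝ)) ^ r * (W n N : ℝ) := by
      have := hcard; push_cast at this ⊢; convert this using 3
    have h1 : c * Real.exp (-a * (N:ℝ) ^ α) * (2 * (n:ℝ)) ^ N
        ≤ (2 * (n:ℝ)) ^ r * (W n N : ℝ) := by
      refine le_trans ?_ hcard'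
      rw [ge_iff_le, le_div_iff₀ hpowN] at hPN
      exact hPN
    -- take logs
    have hWpos : (0:ℝ) < (W n N : ℝ) := by
      exact_mod_cast W_pos (n := n) (N := N) (by omega)
    have hLpos : 0 < c * Real.exp (-a * (N:ℝ) ^ α) * (2 * (n:ℝ)) ^ N := by positivity
    have hlog1 := Real.log_le_log hLpos h1
    have hlogL : Real.log (c * Real.exp (-a * (N:ℝ) ^ α) * (2 * (n:ℝ)) ^ N)
        = Real.log c + (-a * (N:ℝ) ^ α) + N * Real.log (2 * (n:ℝ)) := by
      rw [Real.log_mul (by positivity) (by positivity), Real.log_mul (ne_of_gt hc)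
        (Real.exp_ne_zero _), Real.log_exp, Real.log_pow]
    have hlogR : Real.log ((2 * (n:ℝ)) ^ r * (W n N : ℝ))
        = r * Real.log (2 * (n:ℝ)) + Real.log (W n N : ℝ) := by
      rw [Real.log_mul (by positivity) (ne_of_gt hWpos), Real.log_pow]
    rw [hlogL, hlogR] at hlog1
    -- conclude
    rw [gammaRW, ge_iff_le, le_div_iff₀ hD]
    have hNα1 : (1:ℝ) ≤ (N:ℝ) ^ α := Real.one_le_rpow hN1' (le_of_lt hα0)
    have hNe : (N:ℝ) ^ (-(2:ℝ) / ((n:ℝ) + 2)) * (N:ℝ) = (N:ℝ) ^ α := by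
      rw [heα, ← Real.rpow_add_one (ne_of_gt hN0) (α - 1)]
      ring_nf
    have hκmul : κ * Real.log (2 * (n:ℝ)) = a + Real.log (2 * (n:ℝ)) + 1 + |Real.log c| := by
      rw [hκdef, div_mul_cancel₀ _ (ne_of_gt hlog)]
    have habs : -Real.log c ≤ |Real.log c| := neg_le_abs _
    have hrlog : (r:ℝ) * Real.log (2 * (n:ℝ)) ≤ (N:ℝ) ^ α * Real.log (2 * (n:ℝ)) :=
      mul_le_mul_of_nonneg_right hrle (le_of_lt hlog)
    have key : (1 - κ * (N:ℝ) ^ (-(2:ℝ) / ((n:ℝ) + 2))) * ((N:ℝ) * Real.log (2 * (n:ℝ)))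
        ≤ Real.log c + (-a * (N:ℝ) ^ α) + (N:ℝ) * Real.log (2 * (n:ℝ))
          - (N:ℝ) ^ α * Real.log (2 * (n:ℝ)) := by
      have expand : (1 - κ * (N:ℝ) ^ (-(2:ℝ) / ((n:ℝ) + 2))) * ((N:ℝ) * Real.log (2 * (n:ℝ)))
          = (N:ℝ) * Real.log (2 * (n:ℝ))
            - κ * Real.log (2 * (n:ℝ)) * ((N:ℝ) ^ (-(2:ℝ) / ((n:ℝ) + 2)) * (N:ℝ)) := by ring
      rw [expand, hNe, hκmul]
      nlinarith [hNα1, habs,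
        mul_le_mul_of_nonneg_left hNα1 (abs_nonneg (Real.log c))]
    calc (1 - κ * (N:ℝ) ^ (-(2:ℝ) / ((n:ℝ) + 2))) * ((N:ℝ) * Real.log (2 * (n:ℝ)))
        ≤ Real.log c + (-a * (N:ℝ) ^ α) + (N:ℝ) * Real.log (2 * (n:ℝ))
            - (N:ℝ) ^ α * Real.log (2 * (n:ℝ)) := key
      _ ≤ Real.log c + (-a * (N:ℝ) ^ α) + (N:ℝ) * Real.log (2 * (n:ℝ))
            - (r:ℝ) * Real.log (2 * (n:ℝ)) := by linarith
      _ ≤ Real.log (W n N : ℝ) := by linarith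
  constructor
  · refine ⟨κ, hκ0, ?_⟩
    exact hmain
  · -- tendsto
    have hub : ∀ᶠ N : ℕ in atTop, gammaRW n N ≤ 1 := by
      filter_upwards [eventually_ge_atTop 1] with N hN1
      have hN0 : (0:ℝ) < (N:ℝ) := by exact_mod_cast hN1
      have hD : 0 < (N:ℝ) * Real.log (2 * (n:ℝ)) := mul_pos hN0 hlog
      rw [gammaRW, div_le_one hD]
      have hWpos : (0:ℝ) < (W n N : ℝ) := by
        exact_mod_cast W_pos (n := n) (N := N) (by omega)
      have hWle : (W n N : ℝ) ≤ (2 * (n:ℝ)) ^ N := by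
        have := W_le (n := n) (N := N)
        push_cast
        exact_mod_cast this
      calc Real.log (W n N : ℝ) ≤ Real.log ((2 * (n:ℝ)) ^ N) := Real.log_le_log hWpos hWle
        _ = (N:ℝ) * Real.log (2 * (n:ℝ)) := by rw [Real.log_pow]
    have hy : (0:ℝ) < 2 / ((n:ℝ) + 2) := by positivity
    have h0 : Tendsto (fun N : ℕ => ((N:ℝ)) ^ (-(2:ℝ) / ((n:ℝ) + 2))) atTop (nhds 0) := by
      have := (tendsto_rpow_neg_atTop hy).comp (tendsto_natCast_atTop_atTop (R := ℝ))
      simpa [neg_div, Function.comp_def] using this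
    have hlow : Tendsto (fun N : ℕ => 1 - κ * ((N:ℝ)) ^ (-(2:ℝ) / ((n:ℝ) + 2))) atTop (nhds 1) := by
      have := tendsto_const_nhds (x := (1:ℝ)) (f := atTop (α := ℕ)) |>.sub (h0.const_mul κ)
      simpa using this
    exact tendsto_of_tendsto_of_tendsto_of_le_of_le' hlow tendsto_const_nhds hmain hub
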